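/- Let p > 1, ℓ ∈ (0, p−1), and b > 0 satisfy b < (ℓ+1)/(2p) and p − 1 − (pℓ² + p(p−1)²b²)/(ℓ(ℓ+1 − 2pb)) > 0. Define φ(y) := (2b − y)^{−ℓ}. Then there exists κ > 0 such that for all y ∈ (0, b), p(p−1)φ(y) − [−2pφ'(y) + p(p−1)φ(y)]² / (4[φ''(y) − pφ'(y)]) ≥ κ. -/

import Mathlib

private lemma aux_deriv (b ℓ : ℝ) (x : ℝ) (hx : x < 2 * b) :
    HasDerivAt (fun y : ℝ => (2 * b - y) ^ (-ℓ)) (ℓ * (2 * b - x) ^ (-ℓ - 1)) x := by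
  have h : HasDerivAt (fun y : ℝ => 2 * b - y) (-1) x := by
    simpa using (hasDerivAt_id x).const_sub (2 * b)
  have hne : (2 * b - x) ≠ 0 := by intro h'; nlinarith
  have h2 := (Real.hasDerivAt_rpow_const (x := 2 * b - x) (p := -ℓ) (Or.inl hne)).comp x h
  refine h2.congr_deriv ?_
  ring

private lemma aux_deriv2 (b ℓ : ℝ) (x : ℝ) (hx : x < 2 * b) :
    HasDerivAt (fun y : ℝ => ℓ * (2 * b - y) ^ (-ℓ - 1))
      (ℓ * (ℓ + 1) * (2 * b - x) ^ (-ℓ - 2)) x := by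
  have h : HasDerivAt (fun y : ℝ => 2 * b - y) (-1) x := by
    simpa using (hasDerivAt_id x).const_sub (2 * b)
  have hne : (2 * b - x) ≠ 0 := by intro h'; nlinarith
  have h2 := ((Real.hasDerivAt_rpow_const (x := 2 * b - x) (p := -ℓ - 1)
    (Or.inl hne)).comp x h).const_mul ℓ
  refine h2.congr_deriv ?_
  have he : (-ℓ - 1 - 1 : ℝ) = -ℓ - 2 := by ring
  rw [he]
  ring

set_option maxHeartbeats 1000000 in
theorem stmt_13 (p ℓ b : ℝ) (hp : 1 < p) (hℓ0 : 0 < ℓ) (hℓ : ℓ < p - 1)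
    (hb0 : 0 < b) (hb : b < (ℓ + 1) / (2 * p))
    (hb2 : p - 1 - (p * ℓ ^ 2 + p * (p - 1) ^ 2 * b ^ 2) / (ℓ * (ℓ + 1 - 2 * p * b)) > 0) :
    ∃ κ > 0, ∀ y ∈ Set.Ioo (0 : ℝ) b,
      p * (p - 1) * (fun y : ℝ => (2 * b - y) ^ (-ℓ)) y -
          (-2 * p * deriv (fun y : ℝ => (2 * b - y) ^ (-ℓ)) y +
              p * (p - 1) * (fun y : ℝ => (2 * b - y) ^ (-ℓ)) y) ^ 2 /
            (4 * (deriv (deriv (fun y : ℝ => (2 * b - y) ^ (-ℓ))) y -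
              p * deriv (fun y : ℝ => (2 * b - y) ^ (-ℓ)) y)) ≥ κ := by
  have hp0 : (0 : ℝ) < p := by linarith
  have h2pb : 2 * p * b < ℓ + 1 := by
    have := (lt_div_iff₀ (by positivity : (0:ℝ) < 2 * p)).mp hb
    nlinarith
  set R : ℝ := (p * ℓ ^ 2 + p * (p - 1) ^ 2 * b ^ 2) / (ℓ * (ℓ + 1 - 2 * p * b)) with hR
  set B : ℝ := (2 * b) ^ (-ℓ) with hB
  have hBpos : 0 < B := Real.rpow_pos_of_pos (by linarith) _
  refine ⟨p * B * (p - 1 - R), mul_pos (mul_pos hp0 hBpos) hb2, ?_⟩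
  intro y hy
  obtain ⟨hy0, hyb⟩ := hy
  have hy2b : y < 2 * b := by linarith
  set t : ℝ := 2 * b - y with htdef
  have ht0 : 0 < t := by simp only [htdef]; linarith
  have htb : b < t := by simp only [htdef]; linarith
  have ht2b : t ≤ 2 * b := by simp only [htdef]; linarith
  -- derivatives
  have hd1 : deriv (fun y : ℝ => (2 * b - y) ^ (-ℓ)) y = ℓ * t ^ (-ℓ - 1) :=
    (aux_deriv b ℓ y hy2b).deriv
  have hEq : (fun x : ℝ => ℓ * (2 * b - x) ^ (-ℓ - 1)) =ᶠ[nhds y]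
      deriv (fun y : ℝ => (2 * b - y) ^ (-ℓ)) := by
    filter_upwards [Iio_mem_nhds hy2b] with x hx
    exact ((aux_deriv b ℓ x hx).deriv).symm
  have hd2 : deriv (deriv (fun y : ℝ => (2 * b - y) ^ (-ℓ))) y
      = ℓ * (ℓ + 1) * t ^ (-ℓ - 2) := by
    rw [← hEq.deriv_eq]
    exact (aux_deriv2 b ℓ y hy2b).deriv
  set A : ℝ := t ^ (-ℓ) with hA
  have hApos : 0 < A := Real.rpow_pos_of_pos ht0 _
  have hBA : B ≤ A := Real.rpow_le_rpow_of_nonpos ht0 ht2b (by linarith)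
  have hpow1 : t ^ (-ℓ - 1) = A / t := by
    rw [hA, show (-ℓ - 1 : ℝ) = -ℓ - 1 from rfl, Real.rpow_sub ht0, Real.rpow_one]
  have hpow2 : t ^ (-ℓ - 2) = A / t ^ 2 := by
    rw [hA, show (-ℓ - 2 : ℝ) = -ℓ - ((2:ℕ):ℝ) by push_cast; ring, Real.rpow_sub ht0,
      Real.rpow_natCast]
  simp only [hd1, hd2, hpow1, hpow2]
  -- positivity of the pieces
  have hden0 : 0 < ℓ + 1 - p * t := by nlinarith
  have hden2 : 0 < ℓ + 1 - 2 * p * b := by linarith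
  have htne : t ≠ 0 := ne_of_gt ht0
  have hdenne : ℓ + 1 - p * t ≠ 0 := ne_of_gt hden0
  set Q : ℝ := p * ((p - 1) * t - 2 * ℓ) ^ 2 / (4 * (ℓ * (ℓ + 1 - p * t))) with hQ
  have hAy : (2 * b - y) ^ (-ℓ) = A := by rw [hA]
  have hD : ℓ * (ℓ + 1) * (A / t ^ 2) - p * (ℓ * (A / t)) = ℓ * A * (ℓ + 1 - p * t) / t ^ 2 := by
    field_simp
  have key : p * (p - 1) * (2 * b - y) ^ (-ℓ) -
      (-2 * p * (ℓ * (A / t)) + p * (p - 1) * (2 * b - y) ^ (-ℓ)) ^ 2 /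
        (4 * (ℓ * (ℓ + 1) * (A / t ^ 2) - p * (ℓ * (A / t))))
      = p * A * ((p - 1) - Q) := by
    rw [hAy, hD, hQ]
    field_simp
    ring
  rw [key]
  -- bound Q ≤ R
  have h1 : ((p - 1) * t - 2 * ℓ) ^ 2 ≤ 4 * (ℓ ^ 2 + (p - 1) ^ 2 * b ^ 2) := by
    have hpt : (p - 1) * t ≤ (p - 1) * (2 * b) := by nlinarith
    have hpt0 : 0 < (p - 1) * t := by nlinarith
    nlinarith [mul_le_mul hpt hpt hpt0.le (by nlinarith : (0:ℝ) ≤ (p-1)*(2*b)),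
      mul_pos (mul_pos hℓ0 (by linarith : (0:ℝ) < p - 1)) ht0]
  have h2 : ℓ + 1 - 2 * p * b ≤ ℓ + 1 - p * t := by nlinarith
  have hQR : Q ≤ R := by
    rw [hQ, hR, div_le_div_iff₀ (by positivity) (by positivity)]
    nlinarith [mul_le_mul h1 h2 hden2.le (by positivity), mul_pos hp0 hℓ0]
  have hfin : B * (p - 1 - R) ≤ A * ((p - 1) - Q) :=
    mul_le_mul hBA (by linarith) (by linarith) hApos.le
  nlinarith [mul_le_mul_of_nonneg_left hfin hp0.le]
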